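/- With A₁₁, A₁₂, A₂₁ = f₀A₁₂, A₂₂ = A₁₁ as in the continuum string equation matrix for general ν, the identity ∂_{h₀}A₂₂ - f₀·∂_{f₀}A₁₂ - A₁₂ = 0 holds as an identity of polynomials in h₀, f₀. -/

import Mathlib

/-- Trinomial coefficient C(n; a, b, c) = n!/(a!·b!·c!). -/
noncomputable def trinom (n a b c : ℕ) : ℝ :=
  (Nat.factorial n : ℝ) / ((Nat.factorial a : ℝ) * (Nat.factorial b : ℝ) * (Nat.factorial c : ℝ))

/-- The entry A₁₁ = A₂₂ of the continuum string-equation coefficient matrix. -/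
noncomputable def A11 (ν : ℕ) (s h f : ℝ) : ℝ :=
  1 + (2*(ν:ℝ)+1) * s *
    ∑ μ ∈ Finset.range ν,
      (trinom (2*ν) (2*μ+1) (ν-μ-1) (ν-μ) * h^(2*μ+1) * f^(ν-μ-1)
        + trinom (2*ν) (2*μ) (ν-μ-1) (ν-μ+1) * (2*(μ:ℝ)) * h^(2*μ-1) * f^(ν-μ))

/-- The entry A₁₂ of the continuum string-equation coefficient matrix. -/
noncomputable def A12 (ν : ℕ) (s h f : ℝ) : ℝ :=
  (2*(ν:ℝ)+1) * s *
    ∑ μ ∈ Finset.range ν,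
      trinom (2*ν) (2*μ) (ν-μ-1) (ν-μ+1) * ((ν:ℝ)-(μ:ℝ)+1) * h^(2*μ) * f^(ν-μ-1)

/-- Second identity of Lemma 3.7: ∂_{h₀}A₂₂ - f₀·∂_{f₀}A₁₂ - A₁₂ = 0 (with A₂₂ = A₁₁). -/
lemma key (N a j : ℕ) :
    trinom N (a+1) (j+1) (j+2) * ((a:ℝ)+1)
      + trinom N (a+2) j (j+2) * (((a:ℝ)+2)*((a:ℝ)+1))
      = trinom N a (j+1) (j+3) * (((j:ℝ)+3)*((j:ℝ)+2)) := by
  have e1 : ((Nat.factorial (j+1) : ℝ)) = ((j:ℝ)+1) * Nat.factorial j := by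
    push_cast [Nat.factorial_succ]; ring
  have e2 : ((Nat.factorial (j+2) : ℝ)) = ((j:ℝ)+2)*((j:ℝ)+1) * Nat.factorial j := by
    rw [show j+2 = (j+1)+1 from rfl]
    push_cast [Nat.factorial_succ]; ring
  have e3 : ((Nat.factorial (j+3) : ℝ)) = ((j:ℝ)+3)*((j:ℝ)+2)*((j:ℝ)+1) * Nat.factorial j := by
    rw [show j+3 = ((j+1)+1)+1 from rfl]
    push_cast [Nat.factorial_succ]; ring
  have e4 : ((Nat.factorial (a+1) : ℝ)) = ((a:ℝ)+1) * Nat.factorial a := by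
    push_cast [Nat.factorial_succ]; ring
  have e5 : ((Nat.factorial (a+2) : ℝ)) = ((a:ℝ)+2)*((a:ℝ)+1) * Nat.factorial a := by
    rw [show a+2 = (a+1)+1 from rfl]
    push_cast [Nat.factorial_succ]; ring
  unfold trinom
  rw [e1, e2, e3, e4, e5]
  have fa : (0:ℝ) < Nat.factorial a := by positivity
  have fj : (0:ℝ) < Nat.factorial j := by positivity
  have ha : (0:ℝ) < (a:ℝ)+1 := by positivity
  have hj : (0:ℝ) < (j:ℝ)+1 := by positivity
  field_simp
  ring

lemma key_edge (N a : ℕ) :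
    trinom N (a+1) 0 1 * ((a:ℝ)+1) = trinom N a 0 2 * (2*1) := by
  have e4 : ((Nat.factorial (a+1) : ℝ)) = ((a:ℝ)+1) * Nat.factorial a := by
    push_cast [Nat.factorial_succ]; ring
  unfold trinom
  rw [e4]
  have fa : (0:ℝ) < Nat.factorial a := by positivity
  simp [Nat.factorial]
  field_simp

lemma sum_shift_eq (n : ℕ) (Ta Tb Tc : ℕ → ℝ)
    (hb0 : Tb 0 = 0) (hedge : Ta n = Tc n)
    (hk : ∀ μ, μ < n → Ta μ + Tb (μ+1) = Tc μ) :
    ∑ μ ∈ Finset.range (n+1), (Ta μ + Tb μ) = ∑ μ ∈ Finset.range (n+1), Tc μ := by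
  rw [Finset.sum_add_distrib, Finset.sum_range_succ' Tb n, hb0, add_zero,
      Finset.sum_range_succ Ta, Finset.sum_range_succ Tc, hedge]
  have hmain : (∑ μ ∈ Finset.range n, Ta μ) + ∑ μ ∈ Finset.range n, Tb (μ+1)
      = ∑ μ ∈ Finset.range n, Tc μ := by
    rw [← Finset.sum_add_distrib]
    exact Finset.sum_congr rfl (fun μ hμ => hk μ (Finset.mem_range.mp hμ))
  linarith

theorem stmt_9 (ν : ℕ) (hν : 1 ≤ ν) (s h f : ℝ) :
    deriv (fun x : ℝ => A11 ν s x f) h - f * deriv (fun y : ℝ => A12 ν s h y) f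
      - A12 ν s h f = 0 := by
  obtain ⟨n, rfl⟩ : ∃ n, ν = n + 1 := ⟨ν - 1, by omega⟩
  simp only [A11, A12]
  set N := 2*(n+1) with hN
  set c : ℝ := (2*((n+1:ℕ):ℝ)+1) * s with hc
  have hd1 : HasDerivAt
      (fun x : ℝ => 1 + (2*((n+1:ℕ):ℝ)+1) * s *
        ∑ μ ∈ Finset.range (n+1),
          (trinom N (2*μ+1) (n+1-μ-1) (n+1-μ) * x^(2*μ+1) * f^(n+1-μ-1)
            + trinom N (2*μ) (n+1-μ-1) (n+1-μ+1) * (2*(μ:ℝ)) * x^(2*μ-1) * f^(n+1-μ)))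
      ((2*((n+1:ℕ):ℝ)+1) * s *
        ∑ μ ∈ Finset.range (n+1),
          ((trinom N (2*μ+1) (n+1-μ-1) (n+1-μ) * (((2*μ+1:ℕ):ℝ) * h^(2*μ+1-1))) * f^(n+1-μ-1)
            + (trinom N (2*μ) (n+1-μ-1) (n+1-μ+1) * (2*(μ:ℝ)) * (((2*μ-1:ℕ):ℝ) * h^(2*μ-1-1))) * f^(n+1-μ))) h := by
    refine HasDerivAt.const_add _ (HasDerivAt.const_mul _ (HasDerivAt.fun_sum ?_))
    intro μ _
    exact (((hasDerivAt_pow (2*μ+1) h).const_mul _).mul_const _).add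
      (((hasDerivAt_pow (2*μ-1) h).const_mul _).mul_const _)
  have hd2 : HasDerivAt
      (fun y : ℝ => (2*((n+1:ℕ):ℝ)+1) * s *
        ∑ μ ∈ Finset.range (n+1),
          trinom N (2*μ) (n+1-μ-1) (n+1-μ+1) * (((n+1:ℕ):ℝ)-(μ:ℝ)+1) * h^(2*μ) * y^(n+1-μ-1))
      ((2*((n+1:ℕ):ℝ)+1) * s *
        ∑ μ ∈ Finset.range (n+1),
          (trinom N (2*μ) (n+1-μ-1) (n+1-μ+1) * (((n+1:ℕ):ℝ)-(μ:ℝ)+1) * h^(2*μ)) *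
            (((n+1-μ-1:ℕ):ℝ) * f^(n+1-μ-1-1))) f := by
    refine HasDerivAt.const_mul _ (HasDerivAt.fun_sum ?_)
    intro μ _
    exact (hasDerivAt_pow (n+1-μ-1) f).const_mul _
  rw [hd1.deriv, hd2.deriv]
  -- abbreviations
  have hsum :
      (∑ μ ∈ Finset.range (n+1),
          ((trinom N (2*μ+1) (n+1-μ-1) (n+1-μ) * (((2*μ+1:ℕ):ℝ) * h^(2*μ+1-1))) * f^(n+1-μ-1)
            + (trinom N (2*μ) (n+1-μ-1) (n+1-μ+1) * (2*(μ:ℝ)) * (((2*μ-1:ℕ):ℝ) * h^(2*μ-1-1))) * f^(n+1-μ)))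
      = ∑ μ ∈ Finset.range (n+1),
          (f * ((trinom N (2*μ) (n+1-μ-1) (n+1-μ+1) * (((n+1:ℕ):ℝ)-(μ:ℝ)+1) * h^(2*μ)) *
              (((n+1-μ-1:ℕ):ℝ) * f^(n+1-μ-1-1)))
            + trinom N (2*μ) (n+1-μ-1) (n+1-μ+1) * (((n+1:ℕ):ℝ)-(μ:ℝ)+1) * h^(2*μ) * f^(n+1-μ-1)) := by
    have hr : ∀ μ ∈ Finset.range (n+1),
        (f * ((trinom N (2*μ) (n+1-μ-1) (n+1-μ+1) * (((n+1:ℕ):ℝ)-(μ:ℝ)+1) * h^(2*μ)) *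
              (((n+1-μ-1:ℕ):ℝ) * f^(n+1-μ-1-1)))
            + trinom N (2*μ) (n+1-μ-1) (n+1-μ+1) * (((n+1:ℕ):ℝ)-(μ:ℝ)+1) * h^(2*μ) * f^(n+1-μ-1))
        = trinom N (2*μ) (n+1-μ-1) (n+1-μ+1) * (((n+1:ℕ):ℝ)-(μ:ℝ)+1) * ((n+1-μ:ℕ):ℝ)
            * h^(2*μ) * f^(n+1-μ-1) := by
      intro μ hμ
      simp only [Finset.mem_range] at hμ
      obtain ⟨k, hk⟩ : ∃ k, n+1-μ-1 = k := ⟨_, rfl⟩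
      have h2 : n+1-μ = k+1 := by omega
      rw [hk, h2]
      rcases k with _ | m
      · push_cast
        norm_num
      · simp only [Nat.add_sub_cancel]
        push_cast
        ring
    rw [Finset.sum_congr rfl hr]
    refine sum_shift_eq n _ _ _ ?_ ?_ ?_
    · norm_num
    · simp only [show n+1-n-1 = 0 from by omega, show n+1-n = 1 from by omega,
        show n+1-n+1 = 2 from by omega]
      have hke := key_edge N (2*n)
      push_cast at hke ⊢
      norm_num
      linear_combination h^(2*n) * hke
    · intro μ hμ
      obtain ⟨j, hj⟩ : ∃ j, n = μ + j + 1 := ⟨n - μ - 1, by omega⟩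
      subst hj
      simp only [show μ+j+1+1-μ-1 = j+1 from by omega, show μ+j+1+1-μ = j+2 from by omega,
        show μ+j+1+1-μ+1 = j+3 from by omega, show μ+j+1+1-(μ+1)-1 = j from by omega,
        show μ+j+1+1-(μ+1) = j+1 from by omega, show μ+j+1+1-(μ+1)+1 = j+2 from by omega,
        show 2*(μ+1)-1-1 = 2*μ from by omega, show 2*(μ+1)-1 = 2*μ+1 from by omega,
        show 2*(μ+1) = 2*μ+2 from by omega, show 2*μ+1-1 = 2*μ from by omega]
      have hky := key N (2*μ) j
      push_cast at hky ⊢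
      linear_combination (h^(2*μ) * f^(j+1)) * hky
  rw [hsum, Finset.sum_add_distrib, ← Finset.mul_sum]
  ring
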